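/- For the path P_k on k vertices (k ≥ 4), the 2-coloring of K_{k + ⌊k/2⌋ - 2} consisting of two disjoint blue cliques of sizes k-1 and ⌊k/2⌋-1 with all crossing edges red contains no monochromatic copy of P_k; hence r(P_k) ≥ k + ⌊k/2⌋ - 1. -/

import Mathlib

open SimpleGraph

/-- The graph of edges of color `b` in the 2-coloring `c` of a complete graph. -/
def colorGraph {V : Type*} (c : Sym2 V → Bool) (b : Bool) : SimpleGraph V :=
  SimpleGraph.fromRel (fun u v => c s(u, v) = b)

/-- `G` occurs as a (not nec. induced) subgraph of `H`. -/
def ContainsCopy {V W : Type*} (G : SimpleGraph V) (H : SimpleGraph W) : Prop :=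
  ∃ f : V → W, Function.Injective f ∧ ∀ ⦃u v : V⦄, G.Adj u v → H.Adj (f u) (f v)

/-- The coloring `c` contains a monochromatic copy of `G`. -/
def HasMonoCopy {V W : Type*} (G : SimpleGraph V) (c : Sym2 W → Bool) : Prop :=
  ∃ b : Bool, ContainsCopy G (colorGraph c b)

/-- The (diagonal) Ramsey number of a graph `G`. -/
noncomputable def ramseyNumber {V : Type*} (G : SimpleGraph V) : ℕ :=
  sInf {r : ℕ | ∀ c : Sym2 (Fin r) → Bool, HasMonoCopy G c}

/-- The star `S n = K_{1,n}`: center `0`, `n` leaves. -/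
def starGraph (n : ℕ) : SimpleGraph (Fin (n + 1)) :=
  SimpleGraph.fromRel (fun u v => u = 0)

/-- The bistar `B(m,n)`: adjacent centers `inl 0`, `inl 1`, with `m` resp. `n` leaves. -/
def bistar (m n : ℕ) : SimpleGraph (Fin 2 ⊕ Fin m ⊕ Fin n) :=
  SimpleGraph.fromRel (fun u v =>
    (u = Sum.inl 0 ∧ v = Sum.inl 1) ∨
    (u = Sum.inl 0 ∧ ∃ i, v = Sum.inr (Sum.inl i)) ∨
    (u = Sum.inl 1 ∧ ∃ j, v = Sum.inr (Sum.inr j)))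


lemma ramsey_clique {V : Type*} [DecidableEq V] (c : Sym2 V → Bool) :
    ∀ s t : ℕ, ∀ A : Finset V, (s + t).choose s ≤ A.card →
      (∃ S ⊆ A, S.card = s + 1 ∧ ∀ u ∈ S, ∀ v ∈ S, u ≠ v → c s(u, v) = true) ∨
      (∃ T ⊆ A, T.card = t + 1 ∧ ∀ u ∈ T, ∀ v ∈ T, u ≠ v → c s(u, v) = false) := by
  intro s
  induction s with
  | zero =>
    intro t A hA
    have : 0 < A.card := lt_of_lt_of_le (Nat.choose_pos (by omega)) hA
    obtain ⟨a, ha⟩ := Finset.card_pos.mp this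
    exact Or.inl ⟨{a}, by simpa, by simp, by simp⟩
  | succ s ihs =>
    intro t
    induction t with
    | zero =>
      intro A hA
      have : 0 < A.card := lt_of_lt_of_le (Nat.choose_pos (by omega)) hA
      obtain ⟨a, ha⟩ := Finset.card_pos.mp this
      exact Or.inr ⟨{a}, by simpa, by simp, by simp⟩
    | succ t iht =>
      intro A hA
      have hApos : 0 < A.card := lt_of_lt_of_le (Nat.choose_pos (by omega)) hA
      obtain ⟨v, hv⟩ := Finset.card_pos.mp hApos
      set R := (A.erase v).filter (fun u => c s(v, u) = true) with hRdef
      set B := (A.erase v).filter (fun u => ¬ (c s(v, u) = true)) with hBdef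
      have hRB : R.card + B.card = A.card - 1 := by
        rw [hRdef, hBdef, Finset.card_filter_add_card_filter_not,
          Finset.card_erase_of_mem hv]
      have hch : (s + (t+1)).choose s + ((s+1) + t).choose (s+1)
          = ((s+1)+(t+1)).choose (s+1) := by
        have := Nat.choose_succ_succ (s + t + 1) s
        have h1 : s + (t+1) = s + t + 1 := by omega
        have h2 : (s+1) + t = s + t + 1 := by omega
        have h3 : (s+1)+(t+1) = s + t + 1 + 1 := by omega
        rw [h1, h2, h3, this]
      have hcase : (s + (t+1)).choose s ≤ R.card ∨ ((s+1) + t).choose (s+1) ≤ B.card := by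
        omega
      rcases hcase with hcR | hcB
      · rcases ihs (t+1) R hcR with ⟨S, hSR, hScard, hSmono⟩ | ⟨T, hTR, hTcard, hTmono⟩
        · -- red clique S in red neighborhood: insert v
          have hSsub : S ⊆ A := hSR.trans ((Finset.filter_subset _ _).trans (Finset.erase_subset _ _))
          have hvS : v ∉ S := fun h => Finset.notMem_erase v A
            ((Finset.filter_subset _ _) (hSR h))
          refine Or.inl ⟨insert v S, ?_, ?_, ?_⟩
          · exact Finset.insert_subset hv hSsub
          · rw [Finset.card_insert_of_notMem hvS, hScard]
          · intro u hu w hw huw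
            rcases Finset.mem_insert.mp hu with hu1 | hu1 <;>
              rcases Finset.mem_insert.mp hw with hw1 | hw1
            · exact absurd (hu1.trans hw1.symm) huw
            · subst hu1; exact (Finset.mem_filter.mp (hSR hw1)).2
            · subst hw1; rw [Sym2.eq_swap]; exact (Finset.mem_filter.mp (hSR hu1)).2
            · exact hSmono u hu1 w hw1 huw
        · exact Or.inr ⟨T, hTR.trans ((Finset.filter_subset _ _).trans (Finset.erase_subset _ _)),
            hTcard, hTmono⟩
      · rcases iht B hcB with ⟨S, hSB, hScard, hSmono⟩ | ⟨T, hTB, hTcard, hTmono⟩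
        · exact Or.inl ⟨S, hSB.trans ((Finset.filter_subset _ _).trans (Finset.erase_subset _ _)),
            hScard, hSmono⟩
        · have hTsub : T ⊆ A := hTB.trans ((Finset.filter_subset _ _).trans (Finset.erase_subset _ _))
          have hvT : v ∉ T := fun h => Finset.notMem_erase v A
            ((Finset.filter_subset _ _) (hTB h))
          refine Or.inr ⟨insert v T, Finset.insert_subset hv hTsub, ?_, ?_⟩
          · rw [Finset.card_insert_of_notMem hvT, hTcard]
          · intro u hu w hw huw
            rcases Finset.mem_insert.mp hu with hu1 | hu1 <;>
              rcases Finset.mem_insert.mp hw with hw1 | hw1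
            · exact absurd (hu1.trans hw1.symm) huw
            · subst hu1
              have := (Finset.mem_filter.mp (hTB hw1)).2
              simpa using this
            · subst hw1
              rw [Sym2.eq_swap]
              have := (Finset.mem_filter.mp (hTB hu1)).2
              simpa using this
            · exact hTmono u hu1 w hw1 huw

lemma hasMonoCopy_of_clique {k r : ℕ} (c : Sym2 (Fin r) → Bool) (b : Bool)
    (S : Finset (Fin r)) (hcard : S.card = k)
    (hS : ∀ u ∈ S, ∀ v ∈ S, u ≠ v → c s(u, v) = b) :
    HasMonoCopy (SimpleGraph.pathGraph k) c := by
  refine ⟨b, fun i => (S.equivFin.symm (Fin.cast hcard.symm i) : Fin r), ?_, ?_⟩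
  · intro i j h
    have := Subtype.coe_injective h
    have := S.equivFin.symm.injective this
    exact Fin.cast_injective _ this
  · intro u v huv
    have hne : u ≠ v := huv.ne
    have hne' : (S.equivFin.symm (Fin.cast hcard.symm u) : Fin r)
        ≠ (S.equivFin.symm (Fin.cast hcard.symm v) : Fin r) := by
      intro h
      exact hne (Fin.cast_injective _ (S.equivFin.symm.injective (Subtype.coe_injective h)))
    rw [colorGraph, SimpleGraph.fromRel_adj]
    exact ⟨hne', Or.inl (hS _ (S.equivFin.symm _).2 _ (S.equivFin.symm _).2 hne')⟩

lemma mono_upward {V : Type*} (G : SimpleGraph V) {r r' : ℕ} (h : r ≤ r')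
    (hr : ∀ c : Sym2 (Fin r) → Bool, HasMonoCopy G c) :
    ∀ c : Sym2 (Fin r') → Bool, HasMonoCopy G c := by
  intro c
  obtain ⟨b, f, hinj, hadj⟩ := hr (fun e => c (e.map (Fin.castLE h)))
  refine ⟨b, fun v => Fin.castLE h (f v), (Fin.castLE_injective h).comp hinj, ?_⟩
  intro u v huv
  have := hadj huv
  rw [colorGraph, SimpleGraph.fromRel_adj] at this ⊢
  obtain ⟨hne, hor⟩ := this
  refine ⟨fun hh => hne ((Fin.castLE_injective h) hh), ?_⟩
  simpa [Sym2.map_pair_eq] using hor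

lemma card_range_filter_odd (k : ℕ) :
    ((Finset.range k).filter (fun n => n % 2 = 1)).card = k / 2 := by
  induction k with
  | zero => simp
  | succ k ih =>
    rw [Finset.range_add_one, Finset.filter_insert]
    by_cases h : k % 2 = 1
    · rw [if_pos h, Finset.card_insert_of_notMem (by simp), ih]; omega
    · rw [if_neg h, ih]; omega

lemma card_filter_odd (k : ℕ) :
    (Finset.univ.filter (fun i : Fin k => (i:ℕ) % 2 = 1)).card = k / 2 := by
  rw [← card_range_filter_odd k, Finset.card_filter, Finset.card_filter,
    Fin.sum_univ_eq_sum_range (fun i => if i % 2 = 1 then 1 else 0)]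

lemma no_mono (k : ℕ) (hk : 4 ≤ k) (c : Sym2 (Fin (k + k / 2 - 2)) → Bool)
    (hc : ∀ u v : Fin (k + k / 2 - 2), u ≠ v →
      (c s(u, v) = true ↔ (((u : ℕ) < k - 1) ↔ ((v : ℕ) < k - 1)))) :
    ¬ HasMonoCopy (SimpleGraph.pathGraph k) c := by
  rintro ⟨b, f, hinj, hadj⟩
  have hk0 : 0 < k := by omega
  set g : Fin k → ℕ := fun i => (f i : ℕ) with hg
  have hgN : ∀ i, g i < k + k / 2 - 2 := fun i => (f i).isLt
  have hginj : Function.Injective g := fun i j h => hinj (Fin.val_injective h)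
  have key : ∀ i : ℕ, ∀ h : i + 1 < k,
      (((g ⟨i, by omega⟩ < k - 1) ↔ (g ⟨i+1, h⟩ < k - 1)) ↔ (b = true)) := by
    intro i h
    have hpadj : (SimpleGraph.pathGraph k).Adj ⟨i, by omega⟩ ⟨i+1, h⟩ := by
      rw [SimpleGraph.pathGraph_adj]; left; rfl
    have hAdj := hadj hpadj
    rw [colorGraph, SimpleGraph.fromRel_adj] at hAdj
    obtain ⟨hne, hor⟩ := hAdj
    have hcb : c s(f ⟨i, by omega⟩, f ⟨i+1, h⟩) = b := by
      rcases hor with h1 | h1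
      · exact h1
      · rwa [Sym2.eq_swap]
    have hiff := hc _ _ hne
    rw [hcb] at hiff
    exact hiff.symm
  cases b with
  | true =>
    have H : ∀ i : ℕ, ∀ h : i < k,
        ((g ⟨i, h⟩ < k - 1) ↔ (g ⟨0, hk0⟩ < k - 1)) := by
      intro i
      induction i with
      | zero => intro h; exact Iff.rfl
      | succ i ih =>
        intro h
        have hkey := (key i h).mpr rfl
        exact hkey.symm.trans (ih (by omega))
    by_cases h0 : g ⟨0, hk0⟩ < k - 1
    · have hle : (Finset.univ : Finset (Fin k)).card ≤ (Finset.range (k-1)).card := by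
        apply Finset.card_le_card_of_injOn g
        · intro i _
          rw [Finset.mem_coe, Finset.mem_range]
          exact ((H i.1 i.2).mpr h0 : g i < k - 1)
        · exact hginj.injOn
      rw [Finset.card_univ, Fintype.card_fin, Finset.card_range] at hle
      omega
    · have hle : (Finset.univ : Finset (Fin k)).card ≤
          (Finset.Ico (k-1) (k + k / 2 - 2)).card := by
        apply Finset.card_le_card_of_injOn g
        · intro i _
          rw [Finset.mem_coe, Finset.mem_Ico]
          have h2 : ¬ (g i < k - 1) := fun hh => h0 ((H i.1 i.2).mp hh)
          exact ⟨by omega, hgN i⟩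
        · exact hginj.injOn
      rw [Finset.card_univ, Fintype.card_fin, Nat.card_Ico] at hle
      omega
  | false =>
    have H : ∀ i : ℕ, ∀ h : i < k,
        ((g ⟨i, h⟩ < k - 1) ↔ ((g ⟨0, hk0⟩ < k - 1) ↔ i % 2 = 0)) := by
      intro i
      induction i with
      | zero => intro h; simp
      | succ i ih =>
        intro h
        have hnot : ¬ ((g ⟨i, by omega⟩ < k - 1) ↔ (g ⟨i+1, h⟩ < k - 1)) := by
          intro hh
          exact absurd ((key i h).mp hh) (by simp)
        have hi := ih (by omega)
        have hm : ((i+1) % 2 = 0) ↔ ¬ (i % 2 = 0) := by omega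
        tauto
    have HF : ∀ i : Fin k,
        ((g i < k - 1) ↔ ((g ⟨0, hk0⟩ < k - 1) ↔ (i : ℕ) % 2 = 0)) :=
      fun i => H i.1 i.2
    set Bad := Finset.univ.filter (fun i : Fin k => ¬ (g i < k - 1)) with hBad
    set Good := Finset.univ.filter (fun i : Fin k => g i < k - 1) with hGoodDef
    have hBadle : Bad.card ≤ (Finset.Ico (k-1) (k + k / 2 - 2)).card := by
      apply Finset.card_le_card_of_injOn g
      · intro i hi
        rw [Finset.mem_coe, Finset.mem_Ico]
        have h2 := (Finset.mem_filter.mp (Finset.mem_coe.mp hi)).2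
        exact ⟨by omega, hgN i⟩
      · exact hginj.injOn
    rw [Nat.card_Ico] at hBadle
    have hsum : Good.card + Bad.card = k := by
      classical
      have := Finset.card_filter_add_card_filter_not
        (s := (Finset.univ : Finset (Fin k))) (p := fun i => g i < k - 1)
      simpa [hGoodDef, hBad] using this
    by_cases h0 : g ⟨0, hk0⟩ < k - 1
    · have hBadeq : Bad = Finset.univ.filter (fun i : Fin k => (i:ℕ) % 2 = 1) := by
        ext i
        simp only [hBad, Finset.mem_filter, Finset.mem_univ, true_and]
        have hHi := HF i
        constructor
        · intro hbad
          have h2 : ¬ ((i:ℕ) % 2 = 0) :=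
            fun hh => hbad (hHi.mpr ⟨fun _ => hh, fun _ => h0⟩)
          omega
        · intro hodd hlt
          have h2 := (hHi.mp hlt).mp h0
          omega
      rw [hBadeq, card_filter_odd] at hBadle
      omega
    · have hGoodeq : Good = Finset.univ.filter (fun i : Fin k => (i:ℕ) % 2 = 1) := by
        ext i
        simp only [hGoodDef, Finset.mem_filter, Finset.mem_univ, true_and]
        have hHi := HF i
        constructor
        · intro hgood
          have h2 := hHi.mp hgood
          have h3 : ¬ ((i:ℕ) % 2 = 0) := fun hh => h0 (h2.mpr hh)
          omega
        · intro hodd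
          exact hHi.mpr ⟨fun hh => absurd hh h0, fun hh => by omega⟩
      rw [hGoodeq, card_filter_odd] at hsum
      omega

theorem path_ramsey_lower (k : ℕ) (hk : 4 ≤ k) :
    (∀ c : Sym2 (Fin (k + k / 2 - 2)) → Bool,
      (∀ u v : Fin (k + k / 2 - 2), u ≠ v →
        (c s(u, v) = true ↔ (((u : ℕ) < k - 1) ↔ ((v : ℕ) < k - 1)))) →
      ¬ HasMonoCopy (SimpleGraph.pathGraph k) c) ∧
    k + k / 2 - 1 ≤ ramseyNumber (SimpleGraph.pathGraph k) := by
  constructor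
  · intro c hcc
    exact no_mono k hk c hcc
  · by_contra hcon
    push_neg at hcon
    have hr0 : ∀ c : Sym2 (Fin (((k-1) + (k-1)).choose (k-1))) → Bool,
        HasMonoCopy (SimpleGraph.pathGraph k) c := by
      intro c
      have hcard : ((k-1) + (k-1)).choose (k-1)
          ≤ (Finset.univ : Finset (Fin (((k-1) + (k-1)).choose (k-1)))).card := by
        rw [Finset.card_univ, Fintype.card_fin]
      rcases ramsey_clique c (k-1) (k-1) Finset.univ hcard with
        ⟨T, _, hTcard, hTmono⟩ | ⟨T, _, hTcard, hTmono⟩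
      · exact hasMonoCopy_of_clique c true T (by omega) hTmono
      · exact hasMonoCopy_of_clique c false T (by omega) hTmono
    have hSne : Set.Nonempty {r : ℕ | ∀ c : Sym2 (Fin r) → Bool,
        HasMonoCopy (SimpleGraph.pathGraph k) c} := ⟨_, hr0⟩
    have hmem := Nat.sInf_mem hSne
    have hle : sInf {r : ℕ | ∀ c : Sym2 (Fin r) → Bool,
        HasMonoCopy (SimpleGraph.pathGraph k) c} ≤ k + k / 2 - 2 := by
      have : ramseyNumber (SimpleGraph.pathGraph k) < k + k / 2 - 1 := hcon
      rw [ramseyNumber] at this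
      omega
    have hNmem : ∀ c : Sym2 (Fin (k + k / 2 - 2)) → Bool,
        HasMonoCopy (SimpleGraph.pathGraph k) c :=
      mono_upward (SimpleGraph.pathGraph k) hle hmem
    set c0 : Sym2 (Fin (k + k / 2 - 2)) → Bool :=
      Sym2.lift ⟨fun u v => decide (((u : ℕ) < k - 1) ↔ ((v : ℕ) < k - 1)),
        fun u v => decide_eq_decide.mpr Iff.comm⟩ with hc0def
    have hc0 : ∀ u v : Fin (k + k / 2 - 2), u ≠ v →
        (c0 s(u, v) = true ↔ (((u : ℕ) < k - 1) ↔ ((v : ℕ) < k - 1))) := by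
      intro u v _
      simp [hc0def]
    exact no_mono k hk c0 hc0 (hNmem c0)
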